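/- Let p be an odd prime, let d be an integer not divisible by p, and let n be a nonzero integer. Then there exist x, y in the ring ℤ_p of p-adic integers with x^2 + d·y^2 = n if and only if the p-adic valuation v_p(n) is even or the Legendre symbol (-d/p) equals 1. -/

import Mathlib

open PadicInt Polynomial

section Aux
variable {p : ℕ} [Fact p.Prime]

lemma aux_toZMod_eq_zero_iff (z : ℤ_[p]) : PadicInt.toZMod z = 0 ↔ ‖z‖ < 1 := by
  rw [show (PadicInt.toZMod z = 0) ↔ z ∈ RingHom.ker (PadicInt.toZMod (p := p)) from Iff.rfl,
    PadicInt.ker_toZMod, PadicInt.maximalIdeal_eq_span_p, Ideal.mem_span_singleton,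
    ← PadicInt.norm_lt_one_iff_dvd]

lemma aux_norm_one_iff (z : ℤ_[p]) : ‖z‖ = 1 ↔ PadicInt.toZMod z ≠ 0 := by
  rw [ne_eq, aux_toZMod_eq_zero_iff, not_lt]
  exact ⟨fun h => h.ge, fun h => le_antisymm (PadicInt.norm_le_one z) h⟩

lemma aux_lift (r : ZMod p) : PadicInt.toZMod ((r.val : ℤ_[p])) = r := by
  rw [map_natCast]
  simp [ZMod.natCast_val, ZMod.cast_id]

lemma aux_val_unit {c : ℤ_[p]} (hc : ‖c‖ = 1) : c.valuation = 0 := by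
  have hc0 : c ≠ 0 := by intro h; rw [h, norm_zero] at hc; norm_num at hc
  have := PadicInt.norm_eq_zpow_neg_valuation hc0
  rw [hc] at this
  have hp1 : (1 : ℝ) < (p : ℝ) := by exact_mod_cast (Fact.out : p.Prime).one_lt
  have : (p : ℝ) ^ (0 : ℤ) = (p : ℝ) ^ (-(c.valuation : ℤ)) := by rw [zpow_zero]; exact this
  have := (zpow_right_injective₀ (by positivity) (by linarith)) this
  omega

lemma aux_two_norm (hodd : p ≠ 2) : ‖(2 : ℤ_[p])‖ = 1 := by
  rw [aux_norm_one_iff]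
  have : PadicInt.toZMod (2 : ℤ_[p]) = (2 : ZMod p) := map_ofNat _ 2
  rw [this]
  have hp := (Fact.out : p.Prime)
  intro h
  have h2 : ((2 : ℕ) : ZMod p) = 0 := by exact_mod_cast h
  rw [ZMod.natCast_eq_zero_iff] at h2
  exact hodd ((Nat.prime_dvd_prime_iff_eq hp Nat.prime_two).mp h2)

lemma aux_hensel_quad (hodd : p ≠ 2) (c g : ℤ_[p]) (hc : ‖c‖ = 1) (r : ZMod p) (hr : r ≠ 0)
    (h : PadicInt.toZMod c * r ^ 2 + PadicInt.toZMod g = 0) :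
    ∃ z : ℤ_[p], c * z ^ 2 + g = 0 := by
  set a : ℤ_[p] := (r.val : ℤ_[p]) with ha
  have hta : PadicInt.toZMod a = r := aux_lift r
  have hna : ‖a‖ = 1 := (aux_norm_one_iff a).2 (by rw [hta]; exact hr)
  set F : Polynomial ℤ_[p] := C c * X ^ 2 + C g with hF
  have hder : F.derivative = C c * (C 2 * X) := by
    rw [hF]; simp; left; rw [map_ofNat C 2]; norm_num
  have hde : F.derivative.eval a = c * (2 * a) := by rw [hder]; simp
  have hFe : F.eval a = c * a ^ 2 + g := by rw [hF]; simp
  have hnorm : ‖F.eval a‖ < ‖F.derivative.eval a‖ ^ 2 := by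
    rw [hde, hFe]
    have h1 : ‖c * (2 * a)‖ = 1 := by
      rw [norm_mul, norm_mul, hc, aux_two_norm hodd, hna]; ring
    rw [h1, one_pow, ← aux_toZMod_eq_zero_iff]
    rw [map_add, map_mul, map_pow, hta]
    exact h
  obtain ⟨z, hz, -⟩ := hensels_lemma hnorm
  refine ⟨z, ?_⟩
  rw [hF] at hz; simpa using hz

lemma aux_val_pow_mul (c : ℤ_[p]) (hc : ‖c‖ = 1) (m : ℕ) :
    ((p : ℤ_[p]) ^ m * c).valuation = m := by
  have hc0 : c ≠ 0 := by intro h; rw [h, norm_zero] at hc; norm_num at hc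
  rw [PadicInt.valuation_p_pow_mul m c hc0, aux_val_unit hc, add_zero]

lemma aux_even_of_norm_sq (N z : ℤ_[p]) (hz : z ≠ 0) (hN : N ≠ 0) (h : ‖N‖ = ‖z‖ ^ 2) :
    Even N.valuation := by
  rw [PadicInt.norm_eq_zpow_neg_valuation hN, PadicInt.norm_eq_zpow_neg_valuation hz] at h
  have h2 : ((p : ℝ) ^ (-(z.valuation : ℤ))) ^ 2 = (p : ℝ) ^ (-(z.valuation : ℤ) * 2) := by
    rw [← zpow_natCast ((p : ℝ) ^ (-(z.valuation : ℤ))) 2, ← zpow_mul]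
    norm_num
  rw [h2] at h
  have hp1 : (1 : ℝ) < (p : ℝ) := by exact_mod_cast (Fact.out : p.Prime).one_lt
  have := (zpow_right_injective₀ (by positivity) (by linarith)) h
  exact ⟨z.valuation, by omega⟩

lemma aux_even_val (d : ℤ) (hdn : ‖(d : ℤ_[p])‖ = 1)
    (hns : ¬ IsSquare (-(d : ZMod p))) (x y : ℤ_[p])
    (hN : x ^ 2 + (d : ℤ_[p]) * y ^ 2 ≠ 0) :
    Even (x ^ 2 + (d : ℤ_[p]) * y ^ 2).valuation := by
  by_cases hx0 : x = 0
  · by_cases hy0 : y = 0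
    · exfalso; apply hN; rw [hx0, hy0]; ring
    · apply aux_even_of_norm_sq _ y hy0 hN
      rw [hx0]
      have : (0 : ℤ_[p]) ^ 2 + (d : ℤ_[p]) * y ^ 2 = (d : ℤ_[p]) * y ^ 2 := by ring
      rw [this, norm_mul, hdn, one_mul, norm_pow]
  · by_cases hy0 : y = 0
    · apply aux_even_of_norm_sq _ x hx0 hN
      rw [hy0]
      have : x ^ 2 + (d : ℤ_[p]) * 0 ^ 2 = x ^ 2 := by ring
      rw [this, norm_pow]
    · have hnx2 : ‖x ^ 2‖ = ‖x‖ ^ 2 := norm_pow x 2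
      have hny2 : ‖(d : ℤ_[p]) * y ^ 2‖ = ‖y‖ ^ 2 := by
        rw [norm_mul, hdn, one_mul, norm_pow]
      rcases lt_trichotomy ‖x‖ ‖y‖ with hlt | heq | hgt
      · apply aux_even_of_norm_sq _ y hy0 hN
        have hne : ‖x ^ 2‖ ≠ ‖(d : ℤ_[p]) * y ^ 2‖ := by
          rw [hnx2, hny2]
          nlinarith [norm_nonneg x, norm_nonneg y]
        rw [PadicInt.norm_add_eq_max_of_ne hne, hnx2, hny2]
        apply max_eq_right
        nlinarith [norm_nonneg x, norm_nonneg y]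
      · -- equal norms: both units times p^k
        have hvv : x.valuation = y.valuation := by
          have hx := PadicInt.norm_eq_zpow_neg_valuation hx0
          have hy := PadicInt.norm_eq_zpow_neg_valuation hy0
          rw [hx, hy] at heq
          have hp1 : (1 : ℝ) < (p : ℝ) := by exact_mod_cast (Fact.out : p.Prime).one_lt
          have := (zpow_right_injective₀ (by positivity) (by linarith)) heq
          omega
        set k := x.valuation with hk
        have hky : y.valuation = k := hvv.symm
        have hxs := PadicInt.unitCoeff_spec hx0
        have hys := PadicInt.unitCoeff_spec hy0
        rw [hky] at hys
        set u : ℤ_[p] := (PadicInt.unitCoeff hx0 : ℤ_[p]) with hu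
        set v : ℤ_[p] := (PadicInt.unitCoeff hy0 : ℤ_[p]) with hv
        have hnu : ‖u‖ = 1 := PadicInt.norm_units _
        have hnv : ‖v‖ = 1 := PadicInt.norm_units _
        have hc : ‖u ^ 2 + (d : ℤ_[p]) * v ^ 2‖ = 1 := by
          rw [aux_norm_one_iff]
          intro h0
          rw [map_add, map_pow, map_mul, map_pow, map_intCast] at h0
          have hu0 : PadicInt.toZMod u ≠ 0 := (aux_norm_one_iff u).1 hnu
          have hv0 : PadicInt.toZMod v ≠ 0 := (aux_norm_one_iff v).1 hnv
          apply hns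
          refine ⟨PadicInt.toZMod u * (PadicInt.toZMod v)⁻¹, ?_⟩
          field_simp
          linear_combination -h0
        have hrw : x ^ 2 + (d : ℤ_[p]) * y ^ 2 =
            (p : ℤ_[p]) ^ (2 * k) * (u ^ 2 + (d : ℤ_[p]) * v ^ 2) := by
          rw [hxs, hys]; ring
        rw [hrw, aux_val_pow_mul _ hc]
        exact ⟨k, by push_cast; ring⟩
      · apply aux_even_of_norm_sq _ x hx0 hN
        have hne : ‖x ^ 2‖ ≠ ‖(d : ℤ_[p]) * y ^ 2‖ := by
          rw [hnx2, hny2]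
          nlinarith [norm_nonneg x, norm_nonneg y]
        rw [PadicInt.norm_add_eq_max_of_ne hne, hnx2, hny2]
        apply max_eq_left
        nlinarith [norm_nonneg x, norm_nonneg y]

lemma aux_val_int (n : ℤ) : ((n : ℤ_[p])).valuation = padicValInt p n := by
  have h1 := PadicInt.valuation_coe (n : ℤ_[p])
  have : (((n : ℤ_[p])) : ℚ_[p]) = (n : ℚ_[p]) := by push_cast; ring
  rw [this, Padic.valuation_intCast] at h1
  exact_mod_cast h1.symm

end Aux

section Rep
variable {p : ℕ} [Fact p.Prime]

lemma aux_unit_rep (hodd : p ≠ 2) (d : ℤ) (hd : ¬ (p : ℤ) ∣ d) (m : ℤ_[p]) (hm : ‖m‖ = 1) :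
    ∃ x y : ℤ_[p], x ^ 2 + (d : ℤ_[p]) * y ^ 2 = m := by
  have hdz : ((d : ZMod p)) ≠ 0 := by rwa [ne_eq, ZMod.intCast_zmod_eq_zero_iff_dvd]
  have hdn : ‖(d : ℤ_[p])‖ = 1 := by
    rw [aux_norm_one_iff, map_intCast]; exact hdz
  have hmz : PadicInt.toZMod m ≠ 0 := (aux_norm_one_iff m).1 hm
  have hcard : Fintype.card (ZMod p) % 2 = 1 := by
    rw [ZMod.card]
    exact Nat.odd_iff.1 ((Fact.out : p.Prime).odd_of_ne_two hodd)
  have hf2 : (X ^ 2 - C (PadicInt.toZMod m) : (ZMod p)[X]).degree = 2 :=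
    degree_X_pow_sub_C (by norm_num) _
  have hg2 : (C ((d : ZMod p)) * X ^ 2 : (ZMod p)[X]).degree = 2 := by
    rw [degree_C_mul_X_pow _ hdz]; rfl
  obtain ⟨a, b, hab⟩ := FiniteField.exists_root_sum_quadratic hf2 hg2 hcard
  simp only [eval_sub, eval_pow, eval_X, eval_C, eval_mul] at hab
  -- hab : a ^ 2 - toZMod m + (d : ZMod p) * b ^ 2 = 0
  by_cases ha0 : a = 0
  · -- then d * b^2 = m mod p, b ≠ 0
    have hb0 : b ≠ 0 := by
      intro hb
      rw [ha0, hb] at hab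
      apply hmz
      linear_combination -hab
    obtain ⟨z, hz⟩ := aux_hensel_quad hodd (d : ℤ_[p]) (-m) hdn b hb0 (by
      rw [map_intCast, map_neg]
      rw [ha0] at hab
      linear_combination hab)
    exact ⟨0, z, by linear_combination hz⟩
  · obtain ⟨z, hz⟩ := aux_hensel_quad hodd 1 ((d : ℤ_[p]) * ((b.val : ℤ_[p])) ^ 2 - m)
      norm_one a ha0 (by
        rw [map_one, map_sub, map_mul, map_pow, map_intCast, aux_lift]
        linear_combination hab)
    exact ⟨z, (b.val : ℤ_[p]), by linear_combination hz⟩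

lemma aux_leg_rep (hodd : p ≠ 2) (d : ℤ) (hd : ¬ (p : ℤ) ∣ d)
    (hleg : legendreSym p (-d) = 1) (n : ℤ) :
    ∃ x y : ℤ_[p], x ^ 2 + (d : ℤ_[p]) * y ^ 2 = (n : ℤ_[p]) := by
  have hdz : ((d : ZMod p)) ≠ 0 := by rwa [ne_eq, ZMod.intCast_zmod_eq_zero_iff_dvd]
  have hnd0 : (((-d : ℤ) : ZMod p)) ≠ 0 := by push_cast; simpa using hdz
  have hsq : IsSquare (((-d : ℤ) : ZMod p)) := (legendreSym.eq_one_iff p hnd0).1 hleg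
  obtain ⟨s, hs⟩ := hsq
  have hs0 : s ≠ 0 := by
    intro h; rw [h, mul_zero] at hs; exact hnd0 hs
  obtain ⟨a, haeq⟩ := aux_hensel_quad hodd 1 ((d : ℤ_[p])) norm_one s hs0 (by
    rw [map_one, map_intCast, one_mul]
    push_cast at hs
    linear_combination hs.symm)
  -- haeq : 1 * a ^ 2 + d = 0
  have hna : ‖a‖ = 1 := by
    have hda : a ^ 2 = -(d : ℤ_[p]) := by linear_combination haeq
    have hdn : ‖(d : ℤ_[p])‖ = 1 := by rw [aux_norm_one_iff, map_intCast]; exact hdz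
    have : ‖a‖ ^ 2 = 1 := by
      rw [← norm_pow, hda, norm_neg, hdn]
    nlinarith [norm_nonneg a]
  have h2n : ‖(2 : ℤ_[p])‖ = 1 := aux_two_norm hodd
  have h2i : (2 : ℤ_[p]) * (2 : ℤ_[p]).inv = 1 := PadicInt.mul_inv h2n
  have hai : a * a.inv = 1 := PadicInt.mul_inv hna
  set i2 := (2 : ℤ_[p]).inv
  set ia := a.inv
  set N : ℤ_[p] := (n : ℤ_[p])
  refine ⟨(N + 1) * i2, (N - 1) * i2 * ia, ?_⟩
  linear_combination (((N - 1) * i2 * ia) ^ 2) * haeq +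
    (-(N - 1) ^ 2 * i2 ^ 2 * (a * ia + 1)) * hai + (N * (2 * i2 + 1)) * h2i

end Rep

/-- Let `p` be an odd prime, `d` an integer not divisible by `p`, and `n` a
nonzero integer. Then `x² + d·y² = n` has a solution in the `p`-adic integers
iff `v_p(n)` is even or the Legendre symbol `(-d/p)` equals `1`. -/
theorem padic_solvable_iff (p : ℕ) [Fact p.Prime] (hodd : p ≠ 2)
    (d : ℤ) (hd : ¬ (p : ℤ) ∣ d) (n : ℤ) (hn : n ≠ 0) :
    (∃ x y : ℤ_[p], x ^ 2 + (d : ℤ_[p]) * y ^ 2 = (n : ℤ_[p])) ↔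
      Even (padicValInt p n) ∨ legendreSym p (-d) = 1 := by
  have hdz : ((d : ZMod p)) ≠ 0 := by rwa [ne_eq, ZMod.intCast_zmod_eq_zero_iff_dvd]
  have hnd0 : (((-d : ℤ) : ZMod p)) ≠ 0 := by push_cast; simpa using hdz
  have hdn : ‖(d : ℤ_[p])‖ = 1 := by rw [aux_norm_one_iff, map_intCast]; exact hdz
  have hN0 : ((n : ℤ_[p])) ≠ 0 := Int.cast_ne_zero.mpr hn
  constructor
  · rintro ⟨x, y, hxy⟩
    by_contra hcon
    push_neg at hcon
    obtain ⟨heven, hleg⟩ := hcon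
    have hns : ¬ IsSquare (-(d : ZMod p)) := by
      intro hsq
      apply hleg
      apply (legendreSym.eq_one_iff p hnd0).2
      convert hsq using 1
      push_cast; ring
    have := aux_even_val d hdn hns x y (by rw [hxy]; exact hN0)
    rw [hxy, aux_val_int] at this
    exact heven this
  · rintro (heven | hleg)
    · obtain ⟨k, hk⟩ := heven
      have hval : ((n : ℤ_[p])).valuation = k + k := by
        rw [aux_val_int, hk]
      have hspec := PadicInt.unitCoeff_spec hN0
      rw [hval] at hspec
      obtain ⟨x, y, hxy⟩ := aux_unit_rep hodd d hd (PadicInt.unitCoeff hN0 : ℤ_[p])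
        (PadicInt.norm_units _)
      refine ⟨(p : ℤ_[p]) ^ k * x, (p : ℤ_[p]) ^ k * y, ?_⟩
      rw [hspec]
      linear_combination ((p : ℤ_[p]) ^ k) ^ 2 * hxy
    · exact aux_leg_rep hodd d hd hleg n
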